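/- Let β ∈ (−1,1) and δ ≥ 0. There exist a₀ > 0 and C > 0 such that for every real a ≥ a₀ there is a unique b ∈ ℝ with Im ∫_{−1}^{β} √((a + i·b) − i·x² + i·δ) dx = 0, and this unique b satisfies |b − ( (β² − β + 1)/3 − δ )| ≤ C/a, where √ denotes the principal branch of the complex square root. -/

import Mathlib

open Real Set MeasureTheory

noncomputable def ww (a c : ℝ) : ℝ := c / Real.sqrt (2 * (Real.sqrt (a^2 + c^2) + a))

section wwlemmas

variable {a : ℝ} (ha : 0 < a)
include ha

lemma rr_ge (c : ℝ) : a ≤ Real.sqrt (a^2 + c^2) := by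
  nlinarith [Real.sq_sqrt (by positivity : (0:ℝ) ≤ a^2 + c^2),
    Real.sqrt_nonneg (a^2 + c^2), ha.le, sq_nonneg (Real.sqrt (a^2+c^2) - a)]

lemma den_pos (c : ℝ) : 0 < Real.sqrt (2 * (Real.sqrt (a^2 + c^2) + a)) := by
  have := rr_ge ha c
  apply Real.sqrt_pos.2; nlinarith

omit ha in
lemma ww_neg (c : ℝ) : ww a (-c) = - ww a c := by
  simp [ww, neg_div]

lemma ww_eq_sqrt (c : ℝ) (hc : 0 ≤ c) :
    ww a c = Real.sqrt ((Real.sqrt (a^2 + c^2) - a) / 2) := by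
  have hr := rr_ge ha c
  have hr2 : Real.sqrt (a^2+c^2) ^ 2 = a^2 + c^2 := Real.sq_sqrt (by positivity)
  have h1 : (Real.sqrt (a^2+c^2) - a) / 2 = c^2 / (2 * (Real.sqrt (a^2+c^2) + a)) := by
    have hpos : 0 < Real.sqrt (a^2+c^2) + a := by nlinarith
    field_simp
    nlinarith
  rw [h1, Real.sqrt_div (sq_nonneg c), Real.sqrt_sq hc, ww]

lemma ww_nonneg (c : ℝ) (hc : 0 ≤ c) : 0 ≤ ww a c := by
  rw [ww_eq_sqrt ha c hc]; exact Real.sqrt_nonneg _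

lemma ww_neg_of_neg (c : ℝ) (hc : c < 0) : ww a c < 0 :=
  div_neg_of_neg_of_pos hc (den_pos ha c)

lemma ww_strictMono : StrictMono (ww a) := by
  have key : ∀ c₁ c₂ : ℝ, 0 ≤ c₁ → c₁ < c₂ → ww a c₁ < ww a c₂ := by
    intro c₁ c₂ h0 h
    rw [ww_eq_sqrt ha c₁ h0, ww_eq_sqrt ha c₂ (h0.trans h.le)]
    have hrlt : Real.sqrt (a^2 + c₁^2) < Real.sqrt (a^2 + c₂^2) := by
      apply Real.sqrt_lt_sqrt (by positivity); nlinarith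
    have := rr_ge ha c₁
    apply Real.sqrt_lt_sqrt (by linarith) (by linarith)
  intro c₁ c₂ h
  rcases le_or_gt 0 c₁ with h0 | h0
  · exact key c₁ c₂ h0 h
  · rcases le_or_gt 0 c₂ with h2 | h2
    · exact lt_of_lt_of_le (ww_neg_of_neg ha c₁ h0) (ww_nonneg ha c₂ h2)
    · have := key (-c₂) (-c₁) (by linarith) (by linarith)
      rw [ww_neg (a := a), ww_neg (a := a)] at this; linarith

lemma ww_continuous : Continuous (ww a) := by
  apply Continuous.div continuous_id
  · exact Real.continuous_sqrt.comp (by continuity)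
  · intro c; exact (den_pos ha c).ne'

/-- the key pointwise formula. -/
lemma im_formula (c : ℝ) :
    (((a:ℂ) + (c:ℂ) * Complex.I) ^ (1/2 : ℂ)).im = ww a c := by
  have h12 : (1/2 : ℂ) = (2⁻¹ : ℂ) := by norm_num
  have hre : ((a:ℂ) + (c:ℂ) * Complex.I).re = a := by simp
  have him : ((a:ℂ) + (c:ℂ) * Complex.I).im = c := by simp
  have habs : ‖(a:ℂ) + (c:ℂ) * Complex.I‖ = Real.sqrt (a^2 + c^2) := by
    rw [Complex.norm_def, Complex.normSq_apply, hre, him]; ring_nf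
  rcases le_or_gt 0 c with hc | hc
  · rw [h12, Complex.cpow_inv_two_im_eq_sqrt (by rw [him]; exact hc), habs, hre,
      ww_eq_sqrt ha c hc]
  · rw [h12, Complex.cpow_inv_two_im_eq_neg_sqrt (by rw [him]; exact hc), habs, hre]
    have := ww_eq_sqrt ha (-c) (by linarith)
    rw [ww_neg (a := a), neg_sq] at this
    linarith

end wwlemmas

lemma ww_approx {a : ℝ} (ha : 0 < a) (c : ℝ) :
    |ww a c - c / (2 * Real.sqrt a)| ≤ |c|^3 / (16 * a^2 * Real.sqrt a) := by
  set s := Real.sqrt a with hs_def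
  set r := Real.sqrt (a^2 + c^2) with hr_def
  set D := Real.sqrt (2 * (r + a)) with hD_def
  have hs_pos : 0 < s := Real.sqrt_pos.2 ha
  have hs2 : s^2 = a := Real.sq_sqrt ha.le
  have hr2 : r^2 = a^2 + c^2 := Real.sq_sqrt (by positivity)
  have hra : a ≤ r := rr_ge ha c
  have hD_pos : 0 < D := den_pos ha c
  have hD2 : D^2 = 2 * (r + a) := Real.sq_sqrt (by nlinarith)
  have hD2s : 2 * s ≤ D := by nlinarith
  have hrc : r - a ≤ c^2 / (2*a) := by
    rw [le_div_iff₀ (by linarith : (0:ℝ) < 2*a)]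
    nlinarith
  have hDiff : D - 2*s ≤ c^2 / (4*a*s) := by
    rw [le_div_iff₀ (by positivity)]
    nlinarith [mul_le_mul_of_nonneg_left hD2s (le_of_lt hs_pos)]
  have heq : ww a c - c / (2*s) = c * (2*s - D) / (2*s*D) := by
    rw [ww, ← hr_def, ← hD_def]
    field_simp
  rw [heq, abs_div, abs_mul, abs_sub_comm,
    abs_of_nonneg (by linarith : (0:ℝ) ≤ D - 2*s),
    abs_of_pos (by positivity : (0:ℝ) < 2*s*D)]
  calc |c| * (D - 2*s) / (2*s*D) ≤ |c| * (c^2/(4*a*s)) / (2*s*(2*s)) := by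
        gcongr
      _ = |c|^3 / (16*a^2*s) := by
        have hc3 : |c|^3 = |c| * c^2 := by
          rw [pow_succ, sq_abs]; ring
        rw [hc3, show 2*s*(2*s) = 4*a by nlinarith [hs2],
          show (16:ℝ)*a^2*s = (4*a*s)*(4*a) * 1 by nlinarith [hs2]]
        rw [mul_div_assoc', div_div, mul_one]

set_option maxHeartbeats 2000000 in
/-- Theorem `infiniper`(2): for `a` large,
`Im ∫_{-1}^β √((a+ib) − ix² + iδ) dx = 0` has a unique real solution `b`, with
`|b − ((β²−β+1)/3 − δ)| ≤ C/a`: the curve `Γ_{-1,β}` is asymptotic to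
`ℝ + i(β²−β+1)/3 − iδ`. -/
theorem stmt11 (β : ℝ) (hβ : β ∈ Set.Ioo (-1:ℝ) 1) (δ : ℝ) (hδ : 0 ≤ δ) :
    ∃ a₀ : ℝ, 0 < a₀ ∧ ∃ C : ℝ, 0 < C ∧
      ∀ a : ℝ, a₀ ≤ a →
        (∃! b : ℝ,
          (∫ x in (-1:ℝ)..β,
            ((a : ℂ) + (b : ℂ) * Complex.I - Complex.I * (x : ℂ) ^ 2
              + Complex.I * δ) ^ (1/2 : ℂ)).im = 0) ∧
        ∀ b : ℝ,
          (∫ x in (-1:ℝ)..β,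
            ((a : ℂ) + (b : ℂ) * Complex.I - Complex.I * (x : ℂ) ^ 2
              + Complex.I * δ) ^ (1/2 : ℂ)).im = 0 →
          |b - ((β ^ 2 - β + 1) / 3 - δ)| ≤ C / a := by
  obtain ⟨hβ1, hβ2⟩ := hβ
  refine ⟨2, by norm_num, 2, by norm_num, ?_⟩
  intro a ha2
  have ha : (0:ℝ) < a := by linarith
  obtain ⟨s, hs_def⟩ : ∃ s : ℝ, s = Real.sqrt a := ⟨_, rfl⟩
  have hs_pos : 0 < s := hs_def ▸ Real.sqrt_pos.2 ha
  obtain ⟨L, hL_def⟩ : ∃ L : ℝ, L = β + 1 := ⟨_, rfl⟩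
  have hL : 0 < L := by rw [hL_def]; linarith
  obtain ⟨m, hm_def⟩ : ∃ m : ℝ, m = (β^2 - β + 1)/3 - δ := ⟨_, rfl⟩
  have hwc : Continuous (ww a) := ww_continuous ha
  have hint : ∀ b : ℝ, IntervalIntegrable (fun x => ww a (b - x^2 + δ)) volume (-1) β :=
    fun b => (hwc.comp (by continuity)).intervalIntegrable _ _
  obtain ⟨f, hf_def⟩ : ∃ f : ℝ → ℝ, f = fun b => ∫ x in (-1:ℝ)..β, ww a (b - x^2 + δ) :=
    ⟨_, rfl⟩
  -- bridge between the complex integral and f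
  have him : ∀ b : ℝ, (∫ x in (-1:ℝ)..β,
      ((a : ℂ) + (b : ℂ) * Complex.I - Complex.I * (x : ℂ) ^ 2
        + Complex.I * δ) ^ (1/2 : ℂ)).im = f b := by
    intro b
    have hzeq : ∀ x : ℝ, (a:ℂ) + (b:ℂ)*Complex.I - Complex.I*(x:ℂ)^2 + Complex.I*(δ:ℂ) =
        (a:ℂ) + ((b - x^2 + δ : ℝ):ℂ) * Complex.I := by intro x; push_cast; ring
    have hFc : Continuous (fun x : ℝ =>
        ((a:ℂ) + (b:ℂ)*Complex.I - Complex.I*(x:ℂ)^2 + Complex.I*(δ:ℂ)) ^ (1/2:ℂ)) := by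
      apply Continuous.cpow (by continuity) continuous_const
      intro x
      exact Complex.mem_slitPlane_iff.mpr (Or.inl (by
        simpa [← Complex.ofReal_pow] using ha))
    rw [← Complex.imCLM_apply,
      ← ContinuousLinearMap.intervalIntegral_comp_comm Complex.imCLM
        (hFc.intervalIntegrable _ _)]
    rw [hf_def]
    apply intervalIntegral.integral_congr
    intro x _
    simp only [Complex.imCLM_apply]
    rw [hzeq x, im_formula ha]
  -- strict monotonicity of f
  have fmono : StrictMono f := by
    intro b₁ b₂ hb
    have hpos := intervalIntegral.intervalIntegral_pos_of_pos_on
      (f := fun x => ww a (b₂ - x^2 + δ) - ww a (b₁ - x^2 + δ))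
      ((hint b₂).sub (hint b₁))
      (fun x _ => sub_pos.2 (ww_strictMono ha (by linarith)))
      (by linarith)
    rw [intervalIntegral.integral_sub (hint b₂) (hint b₁)] at hpos
    rw [hf_def]
    linarith
  -- continuity of f
  have fcont : Continuous f := by
    rw [hf_def]
    apply intervalIntegral.continuous_parametric_intervalIntegral_of_continuous'
    show Continuous fun p : ℝ × ℝ => ww a (p.1 - p.2^2 + δ)
    exact hwc.comp (by continuity)
  -- the centering integral vanishes
  have hgint : (∫ x in (-1:ℝ)..β, ((β^2-β+1)/3 - x^2)) = 0 := by
    rw [intervalIntegral.integral_sub intervalIntegrable_const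
      ((continuous_pow 2).intervalIntegrable _ _),
      intervalIntegral.integral_const]
    open intervalIntegral in rw [integral_pow]
    norm_num
    ring
  -- main estimate
  have hest : ∀ b : ℝ, |b - m| ≤ 1 →
      |f b - (b - m) * L / (2*s)| ≤ L / (2 * a^2 * s) := by
    intro b hb
    have hcdecomp : ∀ x : ℝ, b - x^2 + δ = (b - m) + ((β^2-β+1)/3 - x^2) := by
      intro x; rw [hm_def]; ring
    have hlin_int : IntervalIntegrable (fun x => (b - x^2 + δ)/(2*s)) volume (-1) β :=
      (by continuity : Continuous fun x : ℝ => (b - x^2 + δ)/(2*s)).intervalIntegrable _ _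
    have hlin : (∫ x in (-1:ℝ)..β, (b - x^2 + δ)/(2*s)) = (b - m) * L / (2*s) := by
      rw [intervalIntegral.integral_div]
      congr 1
      rw [intervalIntegral.integral_congr (g := fun x : ℝ => (b - m) + ((β^2-β+1)/3 - x^2))
        (fun x _ => hcdecomp x),
        intervalIntegral.integral_add intervalIntegrable_const
          ((by continuity : Continuous fun x : ℝ => (β^2-β+1)/3 - x^2).intervalIntegrable _ _),
        hgint, intervalIntegral.integral_const]
      rw [hL_def, smul_eq_mul]; ring
    have hEbound : ∀ x ∈ Set.uIoc (-1:ℝ) β,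
        ‖ww a (b - x^2 + δ) - (b - x^2 + δ)/(2*s)‖ ≤ 8/(16 * a^2 * s) := by
      intro x hx
      have hx' : x ∈ Set.Ioc (-1:ℝ) β := by rwa [Set.uIoc_of_le (by linarith)] at hx
      have hx2 : x^2 ≤ 1 := by nlinarith [hx'.1, hx'.2]
      have hg1 : |(β^2-β+1)/3 - x^2| ≤ 1 := by
        rw [abs_le]
        constructor <;> nlinarith [sq_nonneg x, sq_nonneg (β - 1/2)]
      have hc2 : |b - x^2 + δ| ≤ 2 := by
        rw [hcdecomp x]
        calc |(b-m) + ((β^2-β+1)/3 - x^2)| ≤ |b-m| + |(β^2-β+1)/3 - x^2| := abs_add_le _ _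
          _ ≤ 2 := by linarith
      have hcube : |b - x^2 + δ|^3 ≤ 8 := by
        have := pow_le_pow_left₀ (abs_nonneg (b - x^2 + δ)) hc2 3
        norm_num at this
        exact this
      rw [Real.norm_eq_abs, hs_def]
      refine (ww_approx ha (b - x^2 + δ)).trans ?_
      gcongr
    have hsub : f b - (b - m)*L/(2*s)
        = ∫ x in (-1:ℝ)..β, (ww a (b - x^2+δ) - (b - x^2+δ)/(2*s)) := by
      rw [intervalIntegral.integral_sub (hint b) hlin_int, hlin, hf_def]
    rw [hsub]
    have hnorm := intervalIntegral.norm_integral_le_of_norm_le_const hEbound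
    rw [Real.norm_eq_abs] at hnorm
    have habs : |β - (-1:ℝ)| = L := by rw [abs_of_pos (by linarith), hL_def]; ring
    rw [habs] at hnorm
    refine hnorm.trans (le_of_eq ?_)
    field_simp
    ring
  -- sign of f at m ± t
  obtain ⟨t, ht_def⟩ : ∃ t : ℝ, t = 2/a^2 := ⟨_, rfl⟩
  have ht_pos : 0 < t := by rw [ht_def]; positivity
  have ht1 : t ≤ 1/2 := by
    rw [ht_def, div_le_div_iff₀ (by positivity) (by norm_num)]
    nlinarith
  have hlt : L/(2*a^2*s) < L/(a^2*s) := by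
    rw [div_lt_div_iff₀ (by positivity) (by positivity)]
    have h0 : 0 < L * (a^2*s) := by positivity
    nlinarith
  have hfpos : 0 < f (m + t) := by
    have he1 : (m + t - m) * L / (2*s) = L / (a^2*s) := by
      rw [ht_def]; field_simp; ring
    have h1 := hest (m+t) (by simp only [add_sub_cancel_left]; rw [abs_of_pos ht_pos]; linarith)
    rw [he1, abs_le] at h1
    linarith [h1.1]
  have hfneg : f (m - t) < 0 := by
    have he2 : (m - t - m) * L / (2*s) = -(L / (a^2*s)) := by
      rw [ht_def]; field_simp; ring
    have h2 := hest (m-t) (by simp only [sub_sub_cancel_left]; rw [abs_neg, abs_of_pos ht_pos]; linarith)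
    rw [he2, abs_le] at h2
    linarith [h2.2]
  -- IVT
  obtain ⟨b₀, hb₀mem, hb₀⟩ := intermediate_value_Icc (by linarith : m - t ≤ m + t)
    fcont.continuousOn ⟨hfneg.le, hfpos.le⟩
  constructor
  · refine ⟨b₀, ?_, ?_⟩
    · exact (him b₀).trans hb₀
    · intro y hy
      exact fmono.injective (((him y).symm.trans hy).trans hb₀.symm)
  · intro b hb
    rw [him b] at hb
    have hble : b ≤ m + t := by
      by_contra h
      push_neg at h
      have := fmono h
      rw [hb] at this
      linarith
    have hbge : m - t ≤ b := by
      by_contra h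
      push_neg at h
      have := fmono h
      rw [hb] at this
      linarith
    have habs : |b - m| ≤ t := abs_le.2 ⟨by linarith, by linarith⟩
    rw [← hm_def]
    refine habs.trans ?_
    rw [ht_def, div_le_div_iff₀ (by positivity) (by positivity)]
    nlinarith
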